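/- Let V be a finite-dimensional complex vector space, B : V × V → ℂ a nondegenerate alternating bilinear form, and s : V → V a linear automorphism preserving B (B(s x, s y) = B(x, y) for all x, y). Let W ⊆ V be an s-invariant subspace that is Lagrangian for B, i.e. W = { v ∈ V : B(v, w) = 0 for all w ∈ W }. If the restriction s|_W has determinant of absolute value 1, then |det(id_W − s|_W)|² = |det(id_V − s)|. -/

import Mathlib

open LinearMap Module Submodule FiniteDimensional

lemma det_prod_triangular {K V₁ V₂ : Type*} [Field K]
    [AddCommGroup V₁] [Module K V₁] [AddCommGroup V₂] [Module K V₂]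
    [FiniteDimensional K V₁] [FiniteDimensional K V₂]
    (A : V₁ →ₗ[K] V₁) (C : V₂ →ₗ[K] V₁) (D : V₂ →ₗ[K] V₂) :
    LinearMap.det
      ((A ∘ₗ LinearMap.fst K V₁ V₂ + C ∘ₗ LinearMap.snd K V₁ V₂).prod
        (D ∘ₗ LinearMap.snd K V₁ V₂)) = LinearMap.det A * LinearMap.det D := by
  classical
  set F := (A ∘ₗ LinearMap.fst K V₁ V₂ + C ∘ₗ LinearMap.snd K V₁ V₂).prod
      (D ∘ₗ LinearMap.snd K V₁ V₂) with hF
  let b₁ := Module.finBasis K V₁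
  let b₂ := Module.finBasis K V₂
  have hM : LinearMap.toMatrix (b₁.prod b₂) (b₁.prod b₂) F =
      Matrix.fromBlocks (LinearMap.toMatrix b₁ b₁ A) (LinearMap.toMatrix b₂ b₁ C)
        0 (LinearMap.toMatrix b₂ b₂ D) := by
    ext i j
    rcases i with i | i <;> rcases j with j | j <;>
      simp [hF, LinearMap.toMatrix_apply, Basis.prod_apply, LinearMap.prod_apply]
  rw [← LinearMap.det_toMatrix (b₁.prod b₂), hM, Matrix.det_fromBlocks_zero₂₁,
    LinearMap.det_toMatrix, LinearMap.det_toMatrix]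

lemma det_dualMap' {K M : Type*} [Field K] [AddCommGroup M] [Module K M]
    [FiniteDimensional K M] (u : M →ₗ[K] M) :
    LinearMap.det (u.dualMap) = LinearMap.det u := by
  classical
  let b := Module.finBasis K M
  rw [← LinearMap.det_toMatrix b u, ← LinearMap.det_toMatrix b.dualBasis u.dualMap,
    LinearMap.dualMap_def, LinearMap.toMatrix_transpose, Matrix.det_transpose]

/-- Corollary (cor:pn_d4), abstract form: let `B` be a nondegenerate alternating bilinear form
on a finite-dimensional complex vector space `V`, `s` a linear automorphism preserving `B`, and
`W ⊆ V` an `s`-invariant Lagrangian subspace.  If `|det (s|_W)| = 1`, then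
`|det (1 - s|_W)|² = |det (1 - s)|`. -/
theorem abs_det_one_sub_restrict_lagrangian
    (V : Type*) [AddCommGroup V] [Module ℂ V] [FiniteDimensional ℂ V]
    (B : LinearMap.BilinForm ℂ V) (hBnd : B.Nondegenerate)
    (hBalt : ∀ x : V, B x x = 0)
    (s : V ≃ₗ[ℂ] V) (hsB : ∀ x y : V, B (s x) (s y) = B x y)
    (W : Submodule ℂ V) (hW : ∀ x ∈ W, s.toLinearMap x ∈ W)
    (hLag : ∀ v : V, v ∈ W ↔ ∀ w ∈ W, B v w = 0)
    (hdet : ‖LinearMap.det (s.toLinearMap.restrict hW)‖ = 1) :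
    ‖LinearMap.det ((LinearMap.id : W →ₗ[ℂ] W) - s.toLinearMap.restrict hW)‖ ^ 2 =
      ‖LinearMap.det ((LinearMap.id : V →ₗ[ℂ] V) - s.toLinearMap)‖ := by
  classical
  have hAlt : B.IsAlt := hBalt
  have hRefl : B.IsRefl := hAlt.isRefl
  set f : V →ₗ[ℂ] V := LinearMap.id - s.toLinearMap with hf
  set sW : W →ₗ[ℂ] W := s.toLinearMap.restrict hW with hsW
  have hWW : ∀ x ∈ W, ∀ y ∈ W, B x y = 0 := fun x hx y hy => ((hLag x).1 hx) y hy
  -- W is its own orthogonal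
  have horth : B.orthogonal W = W := by
    ext v
    rw [LinearMap.BilinForm.mem_orthogonal_iff, hLag]
    constructor
    · intro h w hw
      exact hRefl w v (h w hw)
    · intro h w hw
      exact hRefl v w (h w hw)
  -- dimension count
  have hdim2 : finrank ℂ W + finrank ℂ W = finrank ℂ V := by
    have h1 := LinearMap.BilinForm.finrank_add_finrank_orthogonal (B := B) hRefl W
    rw [horth, LinearMap.BilinForm.orthogonal_top_eq_bot hBnd, inf_bot_eq, finrank_bot, add_zero] at h1
    exact h1
  -- complement
  obtain ⟨W', hc⟩ := Submodule.exists_isCompl W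
  set πW : V →ₗ[ℂ] W := W.projectionOnto W' hc with hπW
  set π' : V →ₗ[ℂ] W' := W'.projectionOnto W hc.symm with hπ'
  set e : (W × W') ≃ₗ[ℂ] V := Submodule.prodEquivOfIsCompl W W' hc with he
  have hesymm : ∀ v : V, e.symm v = (πW v, π' v) := by
    intro v
    rw [LinearEquiv.symm_apply_eq, Submodule.coe_prodEquivOfIsCompl']
    exact (Submodule.projection_add_projection_eq_self hc v).symm
  set g : W' →ₗ[ℂ] W' := π' ∘ₗ s.toLinearMap ∘ₗ W'.subtype with hg
  have hfW : ∀ x ∈ W, f x ∈ W := fun x hx => W.sub_mem hx (hW x hx)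
  set A : W →ₗ[ℂ] W := f.restrict hfW with hA
  set C : W' →ₗ[ℂ] W := πW ∘ₗ f ∘ₗ W'.subtype with hC
  set D : W' →ₗ[ℂ] W' := π' ∘ₗ f ∘ₗ W'.subtype with hD
  -- factorization of det f
  have hconj : (e.symm : V →ₗ[ℂ] (W × W')) ∘ₗ f ∘ₗ (e : (W × W') →ₗ[ℂ] V)
      = (A ∘ₗ LinearMap.fst ℂ W W' + C ∘ₗ LinearMap.snd ℂ W W').prod
          (D ∘ₗ LinearMap.snd ℂ W W') := by
    apply LinearMap.ext
    rintro ⟨w, w'⟩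
    have hew : e (w, w') = (w : V) + (w' : V) := rfl
    have hfw : f (w : V) ∈ W := hfW _ w.2
    have h1 : πW (f (w : V)) = A w := by
      apply Subtype.ext
      show ((πW (f (w : V)) : V)) = _
      rw [show (πW (f (w:V)) : V) = ((⟨f (w:V), hfw⟩ : W) : V) from
        congrArg _ (Submodule.linearProjOfIsCompl_apply_left hc ⟨f (w:V), hfw⟩)]
      rfl
    have h2 : π' (f (w : V)) = 0 := Submodule.projectionOnto_apply_of_mem_right hc.symm hfw
    simp only [LinearMap.comp_apply, LinearEquiv.coe_coe, hew, map_add, hesymm,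
      LinearMap.prod_apply, Pi.prod, LinearMap.add_apply, LinearMap.fst_apply,
      LinearMap.snd_apply, Prod.mk_add_mk, h1, h2]
    simp [hC, hD, LinearMap.comp_apply]
  have hdetf : LinearMap.det f = LinearMap.det A * LinearMap.det D := by
    rw [← det_prod_triangular A C D, ← hconj]
    exact (LinearMap.det_conj f e.symm).symm ▸ rfl
  -- identify A and D
  have hAeq : A = LinearMap.id - sW := by
    apply LinearMap.ext
    intro x
    apply Subtype.ext
    show (f (x : V) : V) = ((x : V) - s.toLinearMap.restrict hW x : V)
    simp [hf, LinearMap.restrict_apply]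
  have hDeq : D = LinearMap.id - g := by
    apply LinearMap.ext
    intro v
    show π' (f (v : V)) = v - g v
    have : f (v : V) = (v : V) - s (v : V) := by simp [hf]
    rw [this, map_sub, Submodule.linearProjOfIsCompl_apply_left hc.symm v]
    rfl
  -- the pairing P : W' → Dual W
  set P : W' →ₗ[ℂ] Module.Dual ℂ W :=
    (LinearMap.lcomp ℂ ℂ W.subtype) ∘ₗ (B ∘ₗ W'.subtype) with hP
  have hPapp : ∀ (v : W') (w : W), P v w = B (v : V) (w : V) := fun v w => rfl
  have hPinj : Function.Injective P := by
    rw [← LinearMap.ker_eq_bot]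
    rw [Submodule.eq_bot_iff]
    intro v hv
    rw [LinearMap.mem_ker] at hv
    have hvW : (v : V) ∈ W := by
      rw [hLag]
      intro w hw
      have := LinearMap.congr_fun hv ⟨w, hw⟩
      simpa [hPapp] using this
    have : (v : V) ∈ W ⊓ W' := ⟨hvW, v.2⟩
    rw [hc.inf_eq_bot] at this
    exact Subtype.ext this
  have hfrk : finrank ℂ W' = finrank ℂ (Module.Dual ℂ W) := by
    have h1 := Submodule.finrank_add_eq_of_isCompl hc
    rw [Subspace.dual_finrank_eq]
    omega
  set Pe : W' ≃ₗ[ℂ] Module.Dual ℂ W := P.linearEquivOfInjective hPinj hfrk with hPe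
  -- restriction of s to W is bijective
  have hsWinj : Function.Injective sW := by
    intro x y hxy
    apply Subtype.ext
    apply s.injective
    have := congrArg (Subtype.val : W → V) hxy
    simpa [hsW, LinearMap.restrict_apply] using this
  set sWe : W ≃ₗ[ℂ] W := LinearEquiv.ofBijective sW
    ⟨hsWinj, (LinearMap.injective_iff_surjective).1 hsWinj⟩ with hsWe
  set T : Module.Dual ℂ W ≃ₗ[ℂ] Module.Dual ℂ W := sWe.dualMap with hT
  -- key duality relation
  have hrel : ∀ v : W', T (Pe (g v)) = Pe v := by
    intro v
    apply LinearMap.ext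
    intro w
    have hPev : ∀ (u : W') (w : W), Pe u w = B (u : V) (w : V) := fun u w => rfl
    have hTapp : T (Pe (g v)) w = Pe (g v) (sW w) := rfl
    rw [hTapp, hPev, hPev]
    have hsww : ((sW w : W) : V) = s (w : V) := rfl
    rw [hsww]
    -- decompose s v
    have hdecomp : s (v : V) = (πW (s (v : V)) : V) + ((g v : W') : V) := by
      exact (Submodule.projection_add_projection_eq_self hc (s (v : V))).symm
    have hBW : B (πW (s (v : V)) : V) (s (w : V)) = 0 :=
      hWW _ (πW (s (v : V))).2 _ (hW _ w.2)
    have := hsB (v : V) (w : V)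
    rw [hdecomp] at this
    simp only [map_add, LinearMap.add_apply] at this
    rw [hBW, zero_add] at this
    exact this
  have hgrel : ∀ v : W', g v = Pe.symm (T.symm (Pe v)) := by
    intro v
    rw [← hrel v]
    simp
  have hDconj : LinearMap.id - g =
      (Pe.symm : Module.Dual ℂ W →ₗ[ℂ] W') ∘ₗ
        (LinearMap.id - T.symm.toLinearMap) ∘ₗ (Pe : W' →ₗ[ℂ] Module.Dual ℂ W) := by
    apply LinearMap.ext
    intro v
    simp only [LinearMap.comp_apply, LinearMap.sub_apply, LinearMap.id_apply,
      LinearEquiv.coe_coe, map_sub, Pe.symm_apply_apply]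
    rw [hgrel v]
  have hdetD : LinearMap.det D = LinearMap.det (LinearMap.id - T.symm.toLinearMap) := by
    rw [hDeq, hDconj]
    exact LinearMap.det_conj _ Pe.symm
  have hfact : LinearMap.id - T.symm.toLinearMap
      = T.symm.toLinearMap ∘ₗ (T.toLinearMap - LinearMap.id) := by
    apply LinearMap.ext
    intro φ
    simp [map_sub]
  have hTmid : T.toLinearMap - LinearMap.id = (-1 : ℂ) • (LinearMap.id - T.toLinearMap) := by
    apply LinearMap.ext
    intro φ
    apply LinearMap.ext
    intro w
    simp
  have hTcoe : T.toLinearMap = sW.dualMap := by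
    apply LinearMap.ext
    intro φ
    apply LinearMap.ext
    intro w
    rfl
  have hdT : LinearMap.det (LinearMap.id - T.toLinearMap)
      = LinearMap.det (LinearMap.id - sW) := by
    have h1 : LinearMap.id - T.toLinearMap = (LinearMap.id - sW).dualMap := by
      apply LinearMap.ext
      intro φ
      apply LinearMap.ext
      intro w
      simp [hTcoe, LinearMap.dualMap_apply, map_sub]
    rw [h1, det_dualMap']
  have hdetT : LinearMap.det T.toLinearMap = LinearMap.det sW := by
    rw [hTcoe, det_dualMap']
  have hTT : T.symm.toLinearMap ∘ₗ T.toLinearMap = LinearMap.id := by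
    apply LinearMap.ext
    intro φ
    simp
  have habsTsymm : ‖LinearMap.det T.symm.toLinearMap‖ = 1 := by
    have h2 : LinearMap.det T.symm.toLinearMap * LinearMap.det T.toLinearMap = 1 := by
      rw [← LinearMap.det_comp, hTT, LinearMap.det_id]
    have h3 := congrArg (‖·‖) h2
    rw [norm_mul, hdetT, hdet, mul_one, norm_one] at h3
    exact h3
  have habsD : ‖LinearMap.det D‖
      = ‖LinearMap.det (LinearMap.id - sW)‖ := by
    rw [hdetD, hfact, LinearMap.det_comp, hTmid, LinearMap.det_smul, hdT]
    rw [norm_mul, norm_mul, habsTsymm, one_mul]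
    simp
  rw [hAeq] at hdetf
  rw [hdetf, norm_mul, habsD, sq]
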